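/- arXiv:2307.00863 — 3 statements merged into one kernel-verified Lean document; each statement's English description precedes it below -/
import Mathlib

section
/- Let ε > 0, b ∈ [0, 2(e^ε − 1)], and p(r) = ((e^ε − 1 − b)·r² + b·r + 1)/(e^ε + 1). Then the Bernoulli mechanism with success-probability function p satisfies ε-local differential privacy: for all r, r' ∈ [0,1], both p(r) ≤ e^ε · p(r') and 1 − p(r) ≤ e^ε · (1 − p(r')). -/
open Real Set

/-- The Bernoulli mechanism with the quadratic probability function
`p r = ((e^ε-1-b) r² + b r + 1)/(e^ε+1)`, `b ∈ [0, 2(e^ε-1)]`, satisfies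
ε-local differential privacy. -/
theorem quadratic_mechanism_ldp (ε b : ℝ) (hε : 0 < ε)
    (hb : b ∈ Icc (0:ℝ) (2 * (exp ε - 1)))
    (p : ℝ → ℝ)
    (hp : ∀ r : ℝ, p r = ((exp ε - 1 - b) * r ^ 2 + b * r + 1) / (exp ε + 1)) :
    ∀ r ∈ Icc (0:ℝ) 1, ∀ r' ∈ Icc (0:ℝ) 1,
      p r ≤ exp ε * p r' ∧ 1 - p r ≤ exp ε * (1 - p r') := by
  obtain ⟨hb0, hb2⟩ := hb
  have hE : (1:ℝ) < exp ε := by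
    have := Real.exp_lt_exp.mpr hε
    simpa using this
  have hEp : (0:ℝ) < exp ε + 1 := by linarith
  intro r hr r' hr'
  obtain ⟨hr0, hr1⟩ := hr
  obtain ⟨hr'0, hr'1⟩ := hr'
  have key : ∀ s : ℝ, 0 ≤ s → s ≤ 1 →
      1 ≤ (exp ε - 1 - b) * s ^ 2 + b * s + 1 ∧
      (exp ε - 1 - b) * s ^ 2 + b * s + 1 ≤ exp ε := by
    intro s hs0 hs1
    constructor
    · nlinarith [mul_nonneg hs0 hs0, mul_nonneg hb0 hs0,
        mul_nonneg (sub_nonneg.mpr hs1) (mul_nonneg hs0 hs0),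
        mul_nonneg (mul_nonneg hb0 hs0) hs0]
    · nlinarith [mul_nonneg (sub_nonneg.mpr hs1) hs0,
        mul_nonneg (mul_nonneg (sub_nonneg.mpr hs1) hs0) hs0,
        mul_nonneg (sub_nonneg.mpr hs1) (sub_nonneg.mpr hs1)]
  obtain ⟨h1r, h2r⟩ := key r hr0 hr1
  obtain ⟨h1r', h2r'⟩ := key r' hr'0 hr'1
  have hpu : p r ≤ exp ε / (exp ε + 1) := by
    rw [hp r]; exact (div_le_div_iff_of_pos_right hEp).mpr h2r
  have hpl : 1 / (exp ε + 1) ≤ p r := by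
    rw [hp r]; exact (div_le_div_iff_of_pos_right hEp).mpr h1r
  have hpu' : p r' ≤ exp ε / (exp ε + 1) := by
    rw [hp r']; exact (div_le_div_iff_of_pos_right hEp).mpr h2r'
  have hpl' : 1 / (exp ε + 1) ≤ p r' := by
    rw [hp r']; exact (div_le_div_iff_of_pos_right hEp).mpr h1r'
  have hEpos : (0:ℝ) < exp ε := Real.exp_pos ε
  constructor
  · calc p r ≤ exp ε / (exp ε + 1) := hpu
      _ = exp ε * (1 / (exp ε + 1)) := by ring
      _ ≤ exp ε * p r' := by
          exact mul_le_mul_of_nonneg_left hpl' hEpos.le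
  · have h1 : 1 - p r ≤ exp ε / (exp ε + 1) := by
      have : 1 - 1 / (exp ε + 1) = exp ε / (exp ε + 1) := by
        field_simp
        ring
      linarith [hpl, this.symm.le]
    have h2 : 1 / (exp ε + 1) ≤ 1 - p r' := by
      have : 1 - exp ε / (exp ε + 1) = 1 / (exp ε + 1) := by
        field_simp
        ring
      linarith [hpu']
    calc 1 - p r ≤ exp ε / (exp ε + 1) := h1
      _ = exp ε * (1 / (exp ε + 1)) := by ring
      _ ≤ exp ε * (1 - p r') := mul_le_mul_of_nonneg_left h2 hEpos.le
end

section
/- Let ε > 0 and p(r) = e^{ε·r}/(e^ε + 1). Then the Bernoulli mechanism with success-probability function p satisfies ε-local differential privacy: for all r, r' ∈ [0,1], both p(r) ≤ e^ε · p(r') and 1 − p(r) ≤ e^ε · (1 − p(r')). -/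
open Real Set

/-- The Bernoulli mechanism with the exponential probability function
`p r = e^{εr}/(e^ε+1)` satisfies ε-local differential privacy. -/
theorem exponential_mechanism_ldp (ε : ℝ) (hε : 0 < ε)
    (p : ℝ → ℝ) (hp : ∀ r : ℝ, p r = exp (ε * r) / (exp ε + 1)) :
    ∀ r ∈ Icc (0:ℝ) 1, ∀ r' ∈ Icc (0:ℝ) 1,
      p r ≤ exp ε * p r' ∧ 1 - p r ≤ exp ε * (1 - p r') := by
  intro r hr r' hr'
  have hd : (0:ℝ) < exp ε + 1 := by positivity
  have h1 : exp (ε * r) ≤ exp ε := by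
    apply exp_le_exp.2
    nlinarith [hr.2, hε.le]
  have h1' : exp (ε * r') ≤ exp ε := by
    apply exp_le_exp.2
    nlinarith [hr'.2, hε.le]
  have h2 : (1:ℝ) ≤ exp (ε * r) := by
    rw [← exp_zero]; apply exp_le_exp.2; nlinarith [hr.1, hε.le]
  have h2' : (1:ℝ) ≤ exp (ε * r') := by
    rw [← exp_zero]; apply exp_le_exp.2; nlinarith [hr'.1, hε.le]
  rw [hp, hp]
  have e1 : (1:ℝ) - exp (ε*r)/(exp ε+1) = (exp ε+1 - exp (ε*r))/(exp ε+1) := by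
    field_simp
  have e1' : (1:ℝ) - exp (ε*r')/(exp ε+1) = (exp ε+1 - exp (ε*r'))/(exp ε+1) := by
    field_simp
  constructor
  · rw [← mul_div_assoc, div_le_div_iff₀ hd hd]
    nlinarith [mul_le_mul h1 h2' zero_le_one (exp_pos ε).le]
  · rw [e1, e1', ← mul_div_assoc, div_le_div_iff₀ hd hd]
    have h3 : (1:ℝ) ≤ exp ε + 1 - exp (ε * r') := by linarith
    nlinarith [mul_le_mul_of_nonneg_left h3 (exp_pos ε).le]
end

section
/- Let ε > 0, b ∈ [0, 2(e^ε − 1)], and let R₁, Rᵢ be integrable random variables with values in [0,1] almost surely, means μ₁, μᵢ and variances σ₁², σᵢ². Then under the quadratic probability function the gap between privatized means equals E[p(R₁)] − E[p(Rᵢ)] = ({(e^ε − 1 − b)(μ₁ + μᵢ) + b}·(μ₁ − μᵢ) + (e^ε − 1 − b)(σ₁² − σᵢ²))/(e^ε + 1). -/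
open Real Set MeasureTheory

lemma second_moment_eq {Ω : Type*} [MeasurableSpace Ω]
    (P : Measure Ω) [IsProbabilityMeasure P] (R : Ω → ℝ) (μ σsq : ℝ)
    (hint : Integrable R P) (hint2 : Integrable (fun ω => (R ω) ^ 2) P)
    (hmean : ∫ ω, R ω ∂P = μ) (hvar : ∫ ω, (R ω - μ) ^ 2 ∂P = σsq) :
    ∫ ω, (R ω) ^ 2 ∂P = σsq + μ ^ 2 := by
  have h : (fun ω => (R ω - μ) ^ 2) = fun ω => (R ω) ^ 2 - (2 * μ * R ω - μ ^ 2) := by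
    funext ω; ring
  have h1 : Integrable (fun ω => 2 * μ * R ω - μ ^ 2) P :=
    (hint.const_mul (2*μ)).sub (integrable_const _)
  have e1 : ∫ ω, ((R ω) ^ 2 - (2 * μ * R ω - μ ^ 2)) ∂P
      = (∫ ω, (R ω)^2 ∂P) - ∫ ω, (2 * μ * R ω - μ ^ 2) ∂P := integral_sub hint2 h1
  have e2 : ∫ ω, (2 * μ * R ω - μ ^ 2) ∂P
      = (∫ ω, 2 * μ * R ω ∂P) - ∫ ω, (μ^2 : ℝ) ∂P :=
    integral_sub (hint.const_mul (2*μ)) (integrable_const _)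
  rw [← hvar, h, e1, e2, integral_const_mul, hmean, integral_const]
  simp
  ring

/-- Under the quadratic probability function, the gap between privatized means of two
arms with means `μ₁, μᵢ` and variances `σ₁sq, σᵢsq` equals
`({(e^ε-1-b)(μ₁+μᵢ)+b}(μ₁-μᵢ) + (e^ε-1-b)(σ₁sq-σᵢsq))/(e^ε+1)`. -/
theorem quadratic_privatized_mean_gap {Ω : Type*} [MeasurableSpace Ω]
    (P : Measure Ω) [IsProbabilityMeasure P]
    (ε b : ℝ) (hε : 0 < ε) (hb : b ∈ Icc (0:ℝ) (2 * (exp ε - 1)))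
    (R₁ Rᵢ : Ω → ℝ) (μ₁ μᵢ σ₁sq σᵢsq : ℝ)
    (hint₁ : Integrable R₁ P) (hintᵢ : Integrable Rᵢ P)
    (hint₁2 : Integrable (fun ω => (R₁ ω) ^ 2) P)
    (hintᵢ2 : Integrable (fun ω => (Rᵢ ω) ^ 2) P)
    (hbd₁ : ∀ᵐ ω ∂P, R₁ ω ∈ Icc (0:ℝ) 1)
    (hbdᵢ : ∀ᵐ ω ∂P, Rᵢ ω ∈ Icc (0:ℝ) 1)
    (hmean₁ : ∫ ω, R₁ ω ∂P = μ₁) (hmeanᵢ : ∫ ω, Rᵢ ω ∂P = μᵢ)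
    (hvar₁ : ∫ ω, (R₁ ω - μ₁) ^ 2 ∂P = σ₁sq)
    (hvarᵢ : ∫ ω, (Rᵢ ω - μᵢ) ^ 2 ∂P = σᵢsq) :
    (∫ ω, ((exp ε - 1 - b) * (R₁ ω) ^ 2 + b * R₁ ω + 1) / (exp ε + 1) ∂P)
      - (∫ ω, ((exp ε - 1 - b) * (Rᵢ ω) ^ 2 + b * Rᵢ ω + 1) / (exp ε + 1) ∂P)
      = (((exp ε - 1 - b) * (μ₁ + μᵢ) + b) * (μ₁ - μᵢ)
          + (exp ε - 1 - b) * (σ₁sq - σᵢsq)) / (exp ε + 1) := by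
  have hm₁ := second_moment_eq P R₁ μ₁ σ₁sq hint₁ hint₁2 hmean₁ hvar₁
  have hmᵢ := second_moment_eq P Rᵢ μᵢ σᵢsq hintᵢ hintᵢ2 hmeanᵢ hvarᵢ
  have key : ∀ (R : Ω → ℝ), Integrable R P → Integrable (fun ω => (R ω)^2) P →
      (∫ ω, ((exp ε - 1 - b) * (R ω) ^ 2 + b * R ω + 1) / (exp ε + 1) ∂P)
      = ((exp ε - 1 - b) * (∫ ω, (R ω)^2 ∂P) + b * (∫ ω, R ω ∂P) + 1) / (exp ε + 1) := by
    intro R hR hR2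
    rw [show (fun ω => ((exp ε - 1 - b) * (R ω) ^ 2 + b * R ω + 1) / (exp ε + 1)) = fun ω => ((exp ε - 1 - b) * (R ω) ^ 2 + b * R ω + 1) * (exp ε + 1)⁻¹ from by funext ω; ring]
    rw [integral_mul_const, ← div_eq_mul_inv]
    congr 1
    have h1 : Integrable (fun ω => (exp ε - 1 - b) * (R ω)^2 + b * R ω) P :=
      (hR2.const_mul _).add (hR.const_mul _)
    have e1 : ∫ ω, ((exp ε - 1 - b) * (R ω)^2 + b * R ω + 1) ∂P
        = (∫ ω, ((exp ε - 1 - b) * (R ω)^2 + b * R ω) ∂P) + ∫ ω, (1:ℝ) ∂P :=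
      integral_add h1 (integrable_const _)
    have e2 : ∫ ω, ((exp ε - 1 - b) * (R ω)^2 + b * R ω) ∂P
        = (∫ ω, (exp ε - 1 - b) * (R ω)^2 ∂P) + ∫ ω, b * R ω ∂P :=
      integral_add (hR2.const_mul _) (hR.const_mul _)
    rw [e1, e2, integral_const_mul, integral_const_mul, integral_const]
    simp
  rw [key R₁ hint₁ hint₁2, key Rᵢ hintᵢ hintᵢ2, hm₁, hmᵢ, hmean₁, hmeanᵢ]
  ring
end
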